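/- An atomic lattice effect algebra E is a complete lattice if and only if E is Archimedean and sharply orthocomplete. -/

import Mathlib

universe u v

/-- An effect algebra: a partial algebra `(E; ⊕, 0, 1)` with `0 ≠ 1`, where `⊕` is
partially defined (domain `D`), commutative and associative where defined, every
element has a unique orthosupplement (`compl`, skolemizing axiom (Eiii)), and
`1 ⊕ x` defined implies `x = 0`. -/
structure EffectAlgebra (E : Type u) where
  D : E → E → Prop
  oplus : E → E → E
  zero : E
  one : E
  zero_ne_one : zero ≠ one
  D_comm : ∀ x y, D x y → D y x
  oplus_comm : ∀ x y, D x y → oplus x y = oplus y x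
  assoc : ∀ x y z, D x y → D (oplus x y) z →
      D y z ∧ D x (oplus y z) ∧ oplus (oplus x y) z = oplus x (oplus y z)
  assoc' : ∀ x y z, D y z → D x (oplus y z) →
      D x y ∧ D (oplus x y) z ∧ oplus (oplus x y) z = oplus x (oplus y z)
  compl : E → E
  D_compl : ∀ x, D x (compl x)
  oplus_compl : ∀ x, oplus x (compl x) = one
  compl_unique : ∀ x y, D x y → oplus x y = one → y = compl x
  one_max : ∀ x, D one x → x = zero

namespace EffectAlgebra

variable {E : Type u} (A : EffectAlgebra E)

/-- The induced order: `x ≤ y` iff `x ⊕ z = y` for some `z`. -/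
def le (x y : E) : Prop := ∃ z, A.D x z ∧ A.oplus x z = y

def IsLB (S : Set E) (m : E) : Prop := ∀ x ∈ S, A.le m x
def IsUB (S : Set E) (m : E) : Prop := ∀ x ∈ S, A.le x m

/-- `m` is the infimum of `S` computed within the subposet `P`. -/
def IsInfIn (P : Set E) (S : Set E) (m : E) : Prop :=
  m ∈ P ∧ A.IsLB S m ∧ ∀ z ∈ P, A.IsLB S z → A.le z m

/-- `m` is the supremum of `S` computed within the subposet `P`. -/
def IsSupIn (P : Set E) (S : Set E) (m : E) : Prop :=
  m ∈ P ∧ A.IsUB S m ∧ ∀ z ∈ P, A.IsUB S z → A.le m z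

/-- `w` is sharp iff the meet `w ∧ w'` exists in `E` and equals `0`. -/
def Sharp (w : E) : Prop := A.IsInfIn Set.univ {w, A.compl w} A.zero

/-- The set `S(E)` of sharp elements. -/
def sharpSet : Set E := {w | A.Sharp w}

def HasMeet (x y : E) : Prop := ∃ m, A.IsInfIn Set.univ {x, y} m
def HasJoin (x y : E) : Prop := ∃ j, A.IsSupIn Set.univ {x, y} j

/-- Every `x` has a least sharp element above it, which is the infimum of the sharp
elements above `x` both in `E` and in `S(E)`. -/
def SharplyDominating : Prop :=
  ∀ x : E, ∃ w, A.Sharp w ∧ A.le x w ∧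
    A.IsInfIn Set.univ {v | A.Sharp v ∧ A.le x v} w ∧
    A.IsInfIn A.sharpSet {v | A.Sharp v ∧ A.le x v} w

/-- Sharply dominating, and `x ∧ w` exists for every `x ∈ E`, `w ∈ S(E)`. -/
def SDominating : Prop :=
  A.SharplyDominating ∧ ∀ x w : E, A.Sharp w → A.HasMeet x w

end EffectAlgebra

/-- `SumDef A l s` : the orthosum of the finite list `l` is defined and equals `s`. -/
inductive EffectAlgebra.SumDef {E : Type u} (A : EffectAlgebra E) : List E → E → Prop
  | nil : EffectAlgebra.SumDef A [] A.zero
  | cons {x : E} {l : List E} {s : E} : EffectAlgebra.SumDef A l s → A.D x s →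
      EffectAlgebra.SumDef A (x :: l) (A.oplus x s)

namespace EffectAlgebra

variable {E : Type u} (A : EffectAlgebra E)

/-- A family is orthogonal iff every finite subfamily has a defined orthosum. -/
def Orthogonal {ι : Type v} (x : ι → E) : Prop :=
  ∀ l : List ι, l.Nodup → ∃ s, A.SumDef (l.map x) s

/-- The set of finite partial orthosums of a family. -/
def finiteSums {ι : Type v} (x : ι → E) : Set E :=
  {s | ∃ l : List ι, l.Nodup ∧ A.SumDef (l.map x) s}

/-- `v = ⊕ x` : the family is orthogonal and `v` is the supremum in `E` of all
finite partial orthosums. -/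
def HasOrthoSum {ι : Type v} (x : ι → E) (v : E) : Prop :=
  A.Orthogonal x ∧ A.IsSupIn Set.univ (A.finiteSums x) v

/-- Every family dominated elementwise by an orthogonal family of sharp
elements has an orthosum. -/
def SharplyOrthocomplete : Prop :=
  ∀ (ι : Type u) (x w : ι → E), (∀ k, A.Sharp (w k)) → A.Orthogonal w →
    (∀ k, A.le (x k) (w k)) → ∃ v, A.HasOrthoSum x v

/-- `c` is central: for every `y` the meets `y ∧ c`, `y ∧ c'` exist and
`y = (y ∧ c) ∨ (y ∧ c')`. -/
def Central (c : E) : Prop :=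
  ∀ y : E, ∃ m₁ m₂, A.IsInfIn Set.univ {y, c} m₁ ∧
    A.IsInfIn Set.univ {y, A.compl c} m₂ ∧ A.IsSupIn Set.univ {m₁, m₂} y

/-- The center `C(E)`. -/
def centerSet : Set E := {c | A.Central c}

def CentrallyDominating : Prop :=
  ∀ x : E, ∃ c, A.Central c ∧ A.le x c ∧
    A.IsInfIn Set.univ {d | A.Central d ∧ A.le x d} c ∧
    A.IsInfIn A.centerSet {d | A.Central d ∧ A.le x d} c

def CentrallyOrthocomplete : Prop :=
  ∀ (ι : Type u) (x c : ι → E), (∀ k, A.Central (c k)) → A.Orthogonal c →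
    (∀ k, A.le (x k) (c k)) → ∃ v, A.HasOrthoSum x v

/-- `P` is bifull in `E`: for `S ⊆ P`, the join of `S` in `P` exists iff the join
of `S` in `E` exists, and then they coincide. -/
def Bifull (P : Set E) : Prop :=
  ∀ S ⊆ P, (∀ s, A.IsSupIn P S s → A.IsSupIn Set.univ S s) ∧
    (∀ s, A.IsSupIn Set.univ S s → A.IsSupIn P S s)

/-- The subposet `P` is a complete lattice: every subset of `P` has a supremum
(and an infimum) computed within `P`. -/
def CompleteIn (P : Set E) : Prop :=
  ∀ S ⊆ P, (∃ s, A.IsSupIn P S s) ∧ (∃ m, A.IsInfIn P S m)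

/-- `E` is a complete lattice. -/
def Complete : Prop :=
  ∀ S : Set E, (∃ s, A.IsSupIn Set.univ S s) ∧ (∃ m, A.IsInfIn Set.univ S m)

/-- The induced order of `E` is a lattice. -/
def LatticeOrdered : Prop := ∀ x y : E, A.HasMeet x y ∧ A.HasJoin x y

/-- `x ↔ y` : `x ∨ y = x ⊕ (y ⊖ (x ∧ y))`. -/
def Compatible (x y : E) : Prop :=
  ∃ m j z, A.IsInfIn Set.univ {x, y} m ∧ A.IsSupIn Set.univ {x, y} j ∧
    A.D m z ∧ A.oplus m z = y ∧ A.D x z ∧ A.oplus x z = j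

/-- An MV-effect algebra: a lattice effect algebra all of whose pairs of elements
are compatible. -/
def MV : Prop := A.LatticeOrdered ∧ ∀ x y : E, A.Compatible x y

/-- `nx = x ⊕ ⋯ ⊕ x` (`n` times) is defined. -/
def nTimesDef (n : ℕ) (x : E) : Prop := ∃ s, A.SumDef (List.replicate n x) s

/-- `ord x < ∞` for every nonzero `x`. -/
def IsArchimedean : Prop := ∀ x : E, x ≠ A.zero → ∃ n : ℕ, ¬ A.nTimesDef n x

def Atom (a : E) : Prop := a ≠ A.zero ∧ ∀ b, A.le b a → b = A.zero ∨ b = a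

def Atomic : Prop := ∀ x : E, x ≠ A.zero → ∃ a, A.Atom a ∧ A.le a x

/-- The subposet `P` (closed under `'`) is an orthomodular lattice. -/
def OrthomodularIn (P : Set E) : Prop :=
  (∀ x ∈ P, ∀ y ∈ P, (∃ m, A.IsInfIn P {x, y} m) ∧ (∃ j, A.IsSupIn P {x, y} j)) ∧
  A.zero ∈ P ∧ A.one ∈ P ∧ (∀ x ∈ P, A.compl x ∈ P) ∧
  (∀ x ∈ P, A.IsInfIn P {x, A.compl x} A.zero ∧ A.IsSupIn P {x, A.compl x} A.one) ∧
  (∀ x ∈ P, ∀ y ∈ P, A.le x y →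
    ∃ m, A.IsInfIn P {y, A.compl x} m ∧ A.IsSupIn P {x, m} y)

def DistributiveIn (P : Set E) : Prop :=
  ∀ x ∈ P, ∀ y ∈ P, ∀ z ∈ P, ∀ jyz mxy mxz m : E,
    A.IsSupIn P {y, z} jyz → A.IsInfIn P {x, y} mxy → A.IsInfIn P {x, z} mxz →
    A.IsInfIn P {x, jyz} m → A.IsSupIn P {mxy, mxz} m

/-- The subposet `P` is a Boolean algebra (complemented distributive lattice with
bounds, complement given by `'`). -/
def BooleanIn (P : Set E) : Prop :=
  (∀ x ∈ P, ∀ y ∈ P, (∃ m, A.IsInfIn P {x, y} m) ∧ (∃ j, A.IsSupIn P {x, y} j)) ∧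
  A.zero ∈ P ∧ A.one ∈ P ∧ (∀ x ∈ P, A.compl x ∈ P) ∧
  (∀ x ∈ P, A.IsInfIn P {x, A.compl x} A.zero ∧ A.IsSupIn P {x, A.compl x} A.one) ∧
  A.DistributiveIn P

/-- A block: a maximal set of pairwise compatible elements. -/
def Block (M : Set E) : Prop :=
  (∀ x ∈ M, ∀ y ∈ M, A.Compatible x y) ∧
  ∀ N : Set E, M ⊆ N → (∀ x ∈ N, ∀ y ∈ N, A.Compatible x y) → N = M

def AtomIn (M : Set E) (a : E) : Prop :=
  a ∈ M ∧ a ≠ A.zero ∧ ∀ b ∈ M, A.le b a → b = A.zero ∨ b = a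

def AtomicIn (M : Set E) : Prop :=
  ∀ x ∈ M, x ≠ A.zero → ∃ a, A.AtomIn M a ∧ A.le a x

end EffectAlgebra


/- ===================== auxiliary development ===================== -/

namespace EffectAlgebra

variable {E : Type u} {A : EffectAlgebra E}

section Basic

lemma oplus_compl' (x : E) : A.oplus (A.compl x) x = A.one := by
  rw [← A.oplus_comm x _ (A.D_compl x), A.oplus_compl]

lemma D_compl' (x : E) : A.D (A.compl x) x := A.D_comm _ _ (A.D_compl x)

lemma compl_compl (x : E) : A.compl (A.compl x) = x :=
  (A.compl_unique (A.compl x) x (A.D_compl' x) (A.oplus_compl' x)).symm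

lemma compl_inj {x y : E} (h : A.compl x = A.compl y) : x = y := by
  have := congrArg A.compl h
  rwa [compl_compl, compl_compl] at this

lemma compl_one : A.compl A.one = A.zero := A.one_max _ (A.D_compl A.one)

lemma D_zero_one : A.D A.zero A.one := by
  have h := A.D_compl A.one
  rw [compl_one] at h
  exact A.D_comm _ _ h

lemma zero_oplus_one : A.oplus A.zero A.one = A.one := by
  have h := A.oplus_compl A.one
  rw [compl_one] at h
  rw [← A.oplus_comm A.one A.zero, h]
  · have h2 := A.D_compl A.one
    rwa [compl_one] at h2

lemma compl_zero : A.compl A.zero = A.one :=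
  (A.compl_unique A.zero A.one A.D_zero_one A.zero_oplus_one).symm

lemma D_zero_left (x : E) : A.D A.zero x := by
  have h := A.assoc' A.zero x (A.compl x) (A.D_compl x) ?_
  · exact h.1
  · rw [A.oplus_compl x]; exact A.D_zero_one

lemma D_zero_right (x : E) : A.D x A.zero := A.D_comm _ _ (A.D_zero_left x)

lemma zero_oplus (x : E) : A.oplus A.zero x = x := by
  have h := A.assoc' A.zero x (A.compl x) (A.D_compl x) ?_
  · -- h : D 0 x ∧ D (0⊕x) x' ∧ (0⊕x)⊕x' = 0⊕(x⊕x')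
    have e : A.oplus (A.oplus A.zero x) (A.compl x) = A.one := by
      rw [h.2.2, A.oplus_compl x, A.zero_oplus_one]
    have hcu := A.compl_unique (A.oplus A.zero x) (A.compl x) h.2.1 e
    exact A.compl_inj hcu.symm
  · rw [A.oplus_compl x]; exact A.D_zero_one

lemma oplus_zero (x : E) : A.oplus x A.zero = x := by
  rw [← A.oplus_comm A.zero x (A.D_zero_left x), zero_oplus]

lemma le_refl (x : E) : A.le x x := ⟨A.zero, A.D_zero_right x, A.oplus_zero x⟩

lemma zero_le (x : E) : A.le A.zero x := ⟨x, A.D_zero_left x, A.zero_oplus x⟩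

lemma le_one (x : E) : A.le x A.one := ⟨A.compl x, A.D_compl x, A.oplus_compl x⟩

lemma le_oplus_left {x y : E} (h : A.D x y) : A.le x (A.oplus x y) := ⟨y, h, rfl⟩

lemma le_oplus_right {x y : E} (h : A.D x y) : A.le y (A.oplus x y) :=
  ⟨x, A.D_comm _ _ h, (A.oplus_comm x y h).symm⟩

lemma le_trans {x y z : E} (h1 : A.le x y) (h2 : A.le y z) : A.le x z := by
  obtain ⟨a, ha, rfl⟩ := h1
  obtain ⟨b, hb, rfl⟩ := h2
  obtain ⟨h3, h4, h5⟩ := A.assoc x a b ha hb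
  exact ⟨A.oplus a b, h4, h5.symm⟩

lemma eq_zero_of_le_zero {x : E} (h : A.le x A.zero) : x = A.zero := by
  obtain ⟨z, hz, e⟩ := h
  have hc : A.compl (A.oplus x z) = A.one := by rw [e, compl_zero]
  have hd : A.D (A.oplus x z) A.one := hc ▸ A.D_compl (A.oplus x z)
  obtain ⟨h1, h2, h3⟩ := A.assoc x z A.one hz hd
  have : A.D A.one z := A.D_comm _ _ h1
  have hz0 : z = A.zero := A.one_max z this
  rw [hz0, oplus_zero] at e
  exact e

lemma oplus_eq_zero {x z : E} (hd : A.D x z) (e : A.oplus x z = A.zero) :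
    x = A.zero ∧ z = A.zero := by
  have hx : x = A.zero := A.eq_zero_of_le_zero ⟨z, hd, e⟩
  subst hx
  rw [A.zero_oplus] at e
  exact ⟨rfl, e⟩

lemma le_antisymm {x y : E} (h1 : A.le x y) (h2 : A.le y x) : x = y := by
  obtain ⟨a, ha, rfl⟩ := h1
  obtain ⟨b, hb, e⟩ := h2
  obtain ⟨h3, h4, h5⟩ := A.assoc x a b ha hb
  -- x ⊕ (a⊕b) = x
  have e2 : A.oplus x (A.oplus a b) = x := by rw [← h5, e]
  -- derive a⊕b = 0
  set u := A.oplus a b with hu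
  have hDu : A.D x u := h4
  have h6 := A.assoc x u (A.compl (A.oplus x u)) hDu (A.D_compl _)
  have e3 : A.oplus x (A.oplus u (A.compl (A.oplus x u))) = A.one := by
    rw [← h6.2.2, A.oplus_compl]
  have e4 := A.compl_unique x _ h6.2.1 e3
  rw [e2] at e4
  have hDucx : A.D u (A.compl x) := by have := h6.1; rwa [e2] at this
  have h7 := A.assoc u (A.compl x) x hDucx (by rw [e4]; exact A.D_compl' x)
  have : A.D A.one u := by
    have := h7.2.1
    rw [A.oplus_compl' x] at this
    exact A.D_comm _ _ this
  have hu0 : u = A.zero := A.one_max u this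
  have ha0 : a = A.zero := (A.oplus_eq_zero h3 hu0).1
  rw [ha0, oplus_zero]

end Basic

section Cancel

lemma compl_oplus_eq {x a : E} (h : A.D x a) :
    A.D a (A.compl (A.oplus x a)) ∧ A.oplus a (A.compl (A.oplus x a)) = A.compl x := by
  have h6 := A.assoc x a (A.compl (A.oplus x a)) h (A.D_compl _)
  refine ⟨h6.1, ?_⟩
  have e3 : A.oplus x (A.oplus a (A.compl (A.oplus x a))) = A.one := by
    rw [← h6.2.2, A.oplus_compl]
  exact A.compl_unique x _ h6.2.1 e3

lemma cancel_left {x a b : E} (ha : A.D x a) (hb : A.D x b)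
    (e : A.oplus x a = A.oplus x b) : a = b := by
  have h1 := A.compl_oplus_eq ha
  have h2 := A.compl_oplus_eq hb
  -- a ⊕ (x⊕a)' = x',  b ⊕ (x⊕b)' = x'
  -- now (a ⊕ t) ⊕  ... use: a ⊕ t = x' = b ⊕ t with t := compl (x⊕a)
  rw [e] at h1
  set t := A.compl (A.oplus x b)
  -- h1 : D a t ∧ a⊕t = x', h2 : D b t ∧ b⊕t = x'
  have h3 := A.assoc a t x h1.1 (by rw [h1.2]; exact A.D_compl' x)
  have h4 := A.assoc b t x h2.1 (by rw [h2.2]; exact A.D_compl' x)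
  have e3 : A.oplus a (A.oplus t x) = A.one := by rw [← h3.2.2, h1.2, A.oplus_compl' x]
  have e4 : A.oplus b (A.oplus t x) = A.one := by rw [← h4.2.2, h2.2, A.oplus_compl' x]
  have u3 := A.compl_unique a _ h3.2.1 e3
  have u4 := A.compl_unique b _ h4.2.1 e4
  exact A.compl_inj (u3 ▸ u4 ▸ rfl)

lemma cancel_right {x a b : E} (ha : A.D a x) (hb : A.D b x)
    (e : A.oplus a x = A.oplus b x) : a = b := by
  apply A.cancel_left (A.D_comm _ _ ha) (A.D_comm _ _ hb)
  rwa [← A.oplus_comm a x ha, ← A.oplus_comm b x hb]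

lemma le_compl_of_D {x y : E} (h : A.D x y) : A.le y (A.compl x) := by
  have h1 := A.compl_oplus_eq h
  exact ⟨A.compl (A.oplus x y), h1.1, h1.2⟩

lemma le_compl_of_D' {x y : E} (h : A.D x y) : A.le x (A.compl y) :=
  A.le_compl_of_D (A.D_comm _ _ h)

lemma D_of_le_compl {x y : E} (h : A.le x (A.compl y)) : A.D x y := by
  obtain ⟨z, hz, e⟩ := h
  have hd : A.D (A.oplus x z) y := by rw [e]; exact A.D_compl' y
  obtain ⟨h1, h2, h3⟩ := A.assoc x z y hz hd
  have h4 : A.D x (A.oplus y z) := by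
    rwa [← A.oplus_comm y z (A.D_comm _ _ h1)] at h2
  exact (A.assoc' x y z (A.D_comm _ _ h1) h4).1

lemma D_iff_le_compl {x y : E} : A.D x y ↔ A.le x (A.compl y) :=
  ⟨A.le_compl_of_D', A.D_of_le_compl⟩

lemma compl_antitone {x y : E} (h : A.le x y) : A.le (A.compl y) (A.compl x) := by
  obtain ⟨z, hz, rfl⟩ := h
  have h1 := A.compl_oplus_eq hz
  -- z ⊕ (x⊕z)' = x'
  exact ⟨z, A.D_comm _ _ h1.1, by rw [← A.oplus_comm z _ h1.1]; exact h1.2⟩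

lemma le_of_compl_le {x y : E} (h : A.le (A.compl y) (A.compl x)) : A.le x y := by
  have := A.compl_antitone h
  rwa [compl_compl, compl_compl] at this

lemma D_mono {x y a b : E} (h : A.D x y) (hax : A.le a x) (hby : A.le b y) : A.D a b := by
  apply A.D_of_le_compl
  exact A.le_trans hax (A.le_trans (A.le_compl_of_D' h) (A.compl_antitone hby))

lemma oplus_le_oplus_right {x a b : E} (h : A.le a b) (hd : A.D x b) :
    A.le (A.oplus x a) (A.oplus x b) := by
  obtain ⟨c, hc, rfl⟩ := h
  have h2 : A.D x (A.oplus a c) := hd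
  obtain ⟨h3, h4, h5⟩ := A.assoc' x a c hc h2
  exact ⟨c, h4, h5⟩

lemma oplus_le_oplus {a b x y : E} (hax : A.le a x) (hby : A.le b y) (hd : A.D x y) :
    A.le (A.oplus a b) (A.oplus x y) := by
  have hab : A.D a b := A.D_mono hd hax hby
  have hay : A.D a y := A.D_mono hd hax (A.le_refl y)
  have h1 : A.le (A.oplus a b) (A.oplus a y) := A.oplus_le_oplus_right hby hay
  apply A.le_trans h1
  rw [A.oplus_comm a y hay]
  obtain ⟨c, hc, rfl⟩ := hax
  rw [A.oplus_comm _ y hd]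
  obtain ⟨h3, h4, h5⟩ := A.assoc' y a c hc (A.D_comm _ _ hd)
  exact ⟨c, h4, h5⟩

lemma cancel_le_left {x a b : E} (hda : A.D x a) (hdb : A.D x b)
    (h : A.le (A.oplus x a) (A.oplus x b)) : A.le a b := by
  obtain ⟨c, hc, e⟩ := h
  obtain ⟨h1, h2, h3⟩ := A.assoc x a c hda hc
  rw [h3] at e
  exact ⟨c, h1, A.cancel_left h2 hdb e⟩

end Cancel

section Sub

open Classical in
/-- Partial difference: `sub u x = u ⊖ x` when `x ≤ u`. -/
noncomputable def sub (A : EffectAlgebra E) (u x : E) : E :=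
  if h : A.le x u then h.choose else A.zero

lemma sub_spec {u x : E} (h : A.le x u) :
    A.D x (A.sub u x) ∧ A.oplus x (A.sub u x) = u := by
  rw [sub, dif_pos h]
  exact h.choose_spec

lemma sub_unique {u x z : E} (hd : A.D x z) (e : A.oplus x z = u) : z = A.sub u x := by
  have h : A.le x u := ⟨z, hd, e⟩
  have hs := A.sub_spec h
  exact A.cancel_left hd hs.1 (e.trans hs.2.symm)

lemma sub_le {u x : E} (h : A.le x u) : A.le (A.sub u x) u := by
  have hs := A.sub_spec h
  have := A.le_oplus_right hs.1
  rwa [hs.2] at this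

lemma sub_le_compl {u x : E} (h : A.le x u) : A.le (A.sub u x) (A.compl x) :=
  A.le_compl_of_D (A.sub_spec h).1

lemma sub_sub_cancel {u x : E} (h : A.le x u) : A.sub u (A.sub u x) = x := by
  have hs := A.sub_spec h
  exact (A.sub_unique (A.D_comm _ _ hs.1) (by rw [← A.oplus_comm x _ hs.1]; exact hs.2)).symm

lemma sub_zero (u : E) : A.sub u A.zero = u :=
  (A.sub_unique (A.D_zero_left u) (A.zero_oplus u)).symm

lemma sub_antitone {u x t : E} (hxt : A.le x t) (htu : A.le t u) :
    A.le (A.sub u t) (A.sub u x) := by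
  have hst := A.sub_spec htu
  have hxu := A.le_trans hxt htu
  obtain ⟨w, hw, rfl⟩ := hxt
  -- u = (x⊕w) ⊕ sub u (x⊕w)
  have h1 := A.assoc x w (A.sub u (A.oplus x w)) hw hst.1
  have e : A.oplus x (A.oplus w (A.sub u (A.oplus x w))) = u := by rw [← h1.2.2]; exact hst.2
  have : A.oplus w (A.sub u (A.oplus x w)) = A.sub u x := A.sub_unique h1.2.1 e
  exact this ▸ A.le_oplus_right h1.1

end Sub

section Sums
open Classical

lemma sumdef_nil_eq {s : E} (h : A.SumDef [] s) : s = A.zero := by cases h; rfl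

lemma sumdef_cons {x : E} {l : List E} {s : E} (h : A.SumDef (x :: l) s) :
    ∃ t, A.SumDef l t ∧ A.D x t ∧ s = A.oplus x t := by
  cases h with
  | cons ht hd => exact ⟨_, ht, hd, rfl⟩

lemma sumdef_unique {l : List E} {s t : E} (hs : A.SumDef l s) (ht : A.SumDef l t) :
    s = t := by
  induction l generalizing s t with
  | nil => rw [A.sumdef_nil_eq hs, A.sumdef_nil_eq ht]
  | cons x l ih =>
    obtain ⟨s', hs', _, rfl⟩ := A.sumdef_cons hs
    obtain ⟨t', ht', _, rfl⟩ := A.sumdef_cons ht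
    rw [ih hs' ht']

lemma sumdef_perm {l₁ l₂ : List E} (hp : l₁.Perm l₂) :
    ∀ {s : E}, A.SumDef l₁ s → A.SumDef l₂ s := by
  induction hp with
  | nil => exact fun h => h
  | cons x h ih =>
    intro s hs
    obtain ⟨t, ht, hd, rfl⟩ := A.sumdef_cons hs
    exact SumDef.cons (ih ht) hd
  | swap x y l =>
    intro s hs
    obtain ⟨s₁, hs₁, hdy, rfl⟩ := A.sumdef_cons hs
    obtain ⟨t, ht, hdx, rfl⟩ := A.sumdef_cons hs₁
    obtain ⟨hyx, hyxt, e1⟩ := A.assoc' y x t hdx hdy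
    have hxy : A.D x y := A.D_comm _ _ hyx
    have hxyt : A.D (A.oplus x y) t := by rwa [A.oplus_comm x y hxy]
    obtain ⟨hyt, hxyt', e2⟩ := A.assoc x y t hxy hxyt
    have : A.oplus x (A.oplus y t) = A.oplus y (A.oplus x t) := by
      rw [← e2, A.oplus_comm x y hxy, e1]
    rw [← this]
    exact SumDef.cons (SumDef.cons ht hyt) hxyt'
  | trans h₁ h₂ ih₁ ih₂ =>
    intro s hs
    exact ih₂ (ih₁ hs)

lemma sumdef_dominated {l₁ l₂ : List E} (hf : List.Forall₂ A.le l₁ l₂) :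
    ∀ {s : E}, A.SumDef l₂ s → ∃ t, A.SumDef l₁ t ∧ A.le t s := by
  induction hf with
  | nil => exact fun hs => ⟨_, SumDef.nil, A.zero_le _⟩
  | @cons a b l₁ l₂ hab h ih =>
    intro s hs
    obtain ⟨s', hs', hd, rfl⟩ := A.sumdef_cons hs
    obtain ⟨t, ht, hts⟩ := ih hs'
    have hdat : A.D a t := A.D_mono hd hab hts
    exact ⟨A.oplus a t, SumDef.cons ht hdat, A.oplus_le_oplus hab hts hd⟩

open Classical in
noncomputable def sumval (A : EffectAlgebra E) (l : List E) : E :=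
  if h : ∃ s, A.SumDef l s then h.choose else A.zero

lemma sumval_eq {l : List E} {s : E} (h : A.SumDef l s) : A.sumval l = s := by
  rw [sumval, dif_pos ⟨s, h⟩]
  exact A.sumdef_unique (⟨s, h⟩ : ∃ s, A.SumDef l s).choose_spec h

noncomputable def nt (A : EffectAlgebra E) (n : ℕ) (a : E) : E :=
  A.sumval (List.replicate n a)

lemma ntd_zero (a : E) : A.nTimesDef 0 a := ⟨A.zero, SumDef.nil⟩

lemma nt_zero (a : E) : A.nt 0 a = A.zero := A.sumval_eq SumDef.nil

lemma nt_sumdef {n : ℕ} {a : E} (h : A.nTimesDef n a) :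
    A.SumDef (List.replicate n a) (A.nt n a) := by
  obtain ⟨s, hs⟩ := h
  simp only [nt]
  rwa [A.sumval_eq hs]

lemma ntd_succ_elim {n : ℕ} {a : E} (h : A.nTimesDef (n + 1) a) :
    A.nTimesDef n a ∧ A.D a (A.nt n a) ∧ A.nt (n + 1) a = A.oplus a (A.nt n a) := by
  obtain ⟨s, hs⟩ := h
  rw [List.replicate_succ] at hs
  obtain ⟨t, ht, hd, rfl⟩ := A.sumdef_cons hs
  have hnt : A.nt n a = t := A.sumval_eq ht
  refine ⟨⟨t, ht⟩, hnt ▸ hd, ?_⟩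
  have : A.SumDef (List.replicate (n+1) a) (A.oplus a t) := by
    rw [List.replicate_succ]; exact SumDef.cons ht hd
  simp only [nt] at hnt ⊢
  rw [A.sumval_eq this, hnt]

lemma ntd_succ_intro {n : ℕ} {a : E} (h : A.nTimesDef n a) (hd : A.D a (A.nt n a)) :
    A.nTimesDef (n + 1) a := by
  refine ⟨A.oplus a (A.nt n a), ?_⟩
  rw [List.replicate_succ]
  exact SumDef.cons (A.nt_sumdef h) hd

lemma ntd_mono {m n : ℕ} {a : E} (hmn : m ≤ n) (h : A.nTimesDef n a) :
    A.nTimesDef m a := by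
  induction n with
  | zero => exact Nat.le_zero.mp hmn ▸ h
  | succ n ih =>
    rcases Nat.lt_or_ge m (n+1) with hlt | hge
    · exact ih (Nat.lt_succ_iff.mp hlt) (A.ntd_succ_elim h).1
    · exact (Nat.le_antisymm hmn hge) ▸ h

lemma nt_one (a : E) : A.nt 1 a = a := by
  have : A.SumDef [a] (A.oplus a A.zero) := SumDef.cons SumDef.nil (A.D_zero_right a)
  have h := A.sumval_eq this
  rw [A.oplus_zero] at h
  exact h

lemma ntd_one (a : E) : A.nTimesDef 1 a := ⟨A.oplus a A.zero, SumDef.cons SumDef.nil (A.D_zero_right a)⟩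

lemma nt_le_nt {m n : ℕ} {a : E} (hmn : m ≤ n) (h : A.nTimesDef n a) :
    A.le (A.nt m a) (A.nt n a) := by
  induction n with
  | zero => rw [Nat.le_zero.mp hmn]; exact A.le_refl _
  | succ n ih =>
    obtain ⟨h1, h2, h3⟩ := A.ntd_succ_elim h
    rcases Nat.lt_or_ge m (n+1) with hlt | hge
    · refine A.le_trans (ih (Nat.lt_succ_iff.mp hlt) h1) ?_
      rw [h3]; exact A.le_oplus_right h2
    · rw [Nat.le_antisymm hmn hge]; exact A.le_refl _

lemma le_nt {n : ℕ} {a : E} (hn : 1 ≤ n) (h : A.nTimesDef n a) : A.le a (A.nt n a) := by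
  have := A.nt_le_nt hn h
  rwa [A.nt_one] at this

open Classical in
noncomputable def nMax (A : EffectAlgebra E) (a : E) : ℕ :=
  if h : ∃ n, ¬ A.nTimesDef n a then Nat.find h - 1 else 0

lemma nMax_spec {a : E} (h : ∃ n, ¬ A.nTimesDef n a) :
    A.nTimesDef (A.nMax a) a ∧ ¬ A.nTimesDef (A.nMax a + 1) a := by
  rw [nMax, dif_pos h]
  have h0 : 1 ≤ Nat.find h := by
    rcases Nat.eq_zero_or_pos (Nat.find h) with h' | h'
    · exact absurd (A.ntd_zero a) (h' ▸ Nat.find_spec h)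
    · exact h'
  constructor
  · by_contra hc
    exact Nat.find_min h (by omega) hc
  · have : Nat.find h - 1 + 1 = Nat.find h := by omega
    rw [this]
    exact Nat.find_spec h

lemma le_nMax {a : E} (h : ∃ n, ¬ A.nTimesDef n a) {k : ℕ} (hk : A.nTimesDef k a) :
    k ≤ A.nMax a := by
  by_contra hc
  exact (A.nMax_spec h).2 (A.ntd_mono (by omega) hk)

end Sums

section LatticeLemmas
open Classical

lemma lb_pair {x y z : E} : A.IsLB {x, y} z ↔ A.le z x ∧ A.le z y := by
  constructor
  · intro h
    exact ⟨h x (Set.mem_insert _ _), h y (Set.mem_insert_of_mem _ rfl)⟩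
  · rintro ⟨h1, h2⟩ w hw
    rcases hw with rfl | hw
    · exact h1
    · rcases hw with rfl; exact h2

lemma ub_pair {x y z : E} : A.IsUB {x, y} z ↔ A.le x z ∧ A.le y z := by
  constructor
  · intro h
    exact ⟨h x (Set.mem_insert _ _), h y (Set.mem_insert_of_mem _ rfl)⟩
  · rintro ⟨h1, h2⟩ w hw
    rcases hw with rfl | hw
    · exact h1
    · rcases hw with rfl; exact h2

variable (hL : A.LatticeOrdered)
include hL

noncomputable def mtF (x y : E) : E := ((hL x y).1).choose

noncomputable def jnF (x y : E) : E := ((hL x y).2).choose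

lemma mtF_le_left (x y : E) : A.le (mtF hL x y) x :=
  ((lb_pair (A := A)).mp ((hL x y).1).choose_spec.2.1).1

lemma mtF_le_right (x y : E) : A.le (mtF hL x y) y :=
  ((lb_pair (A := A)).mp ((hL x y).1).choose_spec.2.1).2

lemma le_mtF {x y z : E} (h1 : A.le z x) (h2 : A.le z y) : A.le z (mtF hL x y) :=
  ((hL x y).1).choose_spec.2.2 z (Set.mem_univ z) ((lb_pair (A := A)).mpr ⟨h1, h2⟩)

lemma le_jnF_left (x y : E) : A.le x (jnF hL x y) :=
  ((ub_pair (A := A)).mp ((hL x y).2).choose_spec.2.1).1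

lemma le_jnF_right (x y : E) : A.le y (jnF hL x y) :=
  ((ub_pair (A := A)).mp ((hL x y).2).choose_spec.2.1).2

lemma jnF_le {x y z : E} (h1 : A.le x z) (h2 : A.le y z) : A.le (jnF hL x y) z :=
  ((hL x y).2).choose_spec.2.2 z (Set.mem_univ z) ((ub_pair (A := A)).mpr ⟨h1, h2⟩)

/-- If `x ⊥ y` and `x ∧ y = 0` then `x ⊕ y` is the join of `x` and `y`. -/
lemma oplus_sup {x y : E} (hd : A.D x y) (hz : ∀ z, A.le z x → A.le z y → z = A.zero) :
    ∀ {z : E}, A.le x z → A.le y z → A.le (A.oplus x y) z := by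
  set u := A.oplus x y with hu
  set j := jnF hL x y with hj
  have hxu : A.le x u := A.le_oplus_left hd
  have hyu : A.le y u := A.le_oplus_right hd
  have hju : A.le j u := A.jnF_le hL hxu hyu
  have hsx : A.sub u x = y := (A.sub_unique hd rfl).symm
  have hsy : A.sub u y = x :=
    (A.sub_unique (A.D_comm _ _ hd) (A.oplus_comm x y hd).symm).symm
  have h1 : A.le (A.sub u j) y := by
    have := A.sub_antitone (A.le_jnF_left hL x y) hju
    rwa [hsx] at this
  have h2 : A.le (A.sub u j) x := by
    have := A.sub_antitone (A.le_jnF_right hL x y) hju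
    rwa [hsy] at this
  have h0 : A.sub u j = A.zero := hz _ h2 h1
  have hju' : u = j := by
    have := A.sub_sub_cancel hju
    rwa [h0, A.sub_zero] at this
  intro z hxz hyz
  rw [hju']
  exact A.jnF_le hL hxz hyz

/-- Core lemma: anything below `j·a` and orthogonal to it, not above the atom `a`,
is zero. -/
lemma meet_mult_zero {a : E} (ha : A.Atom a) :
    ∀ (j : ℕ) (m : E), A.nTimesDef j a → A.le m (A.nt j a) → A.D m (A.nt j a) →
      ¬ A.le a m → m = A.zero := by
  intro j
  induction j with
  | zero =>
    intro m _ hm _ _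
    rw [A.nt_zero] at hm
    exact A.eq_zero_of_le_zero hm
  | succ j ih =>
    intro m hdj1 hm hdm hnam
    obtain ⟨hdj, hda, hnt⟩ := A.ntd_succ_elim hdj1
    have hmc : A.le m (A.compl (A.nt (j+1) a)) := A.le_compl_of_D' hdm
    have hjle : A.le (A.nt j a) (A.nt (j+1) a) := A.nt_le_nt (Nat.le_succ j) hdj1
    have hmcj : A.le m (A.compl (A.nt j a)) :=
      A.le_trans hmc (A.compl_antitone hjle)
    have hdmj : A.D m (A.nt j a) := A.D_of_le_compl hmcj
    -- every common lower bound of m and nt j a is zero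
    have hz : ∀ z, A.le z m → A.le z (A.nt j a) → z = A.zero := by
      intro z hzm hzj
      apply ih z hdj hzj
      · exact A.D_of_le_compl (A.le_trans hzm hmcj)
      · intro haz
        exact hnam (A.le_trans haz hzm)
    have hle2 : A.le (A.oplus m (A.nt j a)) (A.nt (j+1) a) :=
      A.oplus_sup hL hdmj hz hm hjle
    -- nt (j+1) a = nt j a ⊕ a
    have hnt' : A.nt (j+1) a = A.oplus (A.nt j a) a := by
      rw [hnt, A.oplus_comm a _ hda]
    rw [hnt', A.oplus_comm m _ hdmj] at hle2
    have hma : A.le m a :=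
      A.cancel_le_left (A.D_comm _ _ hdmj) (A.D_comm _ _ hda) hle2
    rcases ha.2 m hma with h0 | hma'
    · exact h0
    · exact absurd (hma' ▸ A.le_refl m) hnam

lemma atom_not_le_mult {a b : E} (ha : A.Atom a) (hb : A.Atom b) (hab : a ≠ b)
    {j : ℕ} (hjd : A.nTimesDef j b) (hd : A.D a (A.nt j b)) (hle : A.le a (A.nt j b)) :
    False := by
  have hnba : ¬ A.le b a := by
    intro h
    rcases ha.2 b h with h0 | h1
    · exact hb.1 h0
    · exact hab h1.symm
  have := A.meet_mult_zero hL hb j a hjd hle hd hnba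
  exact ha.1 this

/-- Raising the multiplicity of an atom in an orthogonal sum. -/
lemma raise_step {a y : E} {j : ℕ} (ha : A.Atom a) (hj : 1 ≤ j)
    (hdj1 : A.nTimesDef (j+1) a) (hdy : A.D (A.nt j a) y) (hnay : ¬ A.le a y) :
    A.D (A.nt (j+1) a) y ∧
      A.oplus (A.nt (j+1) a) y = A.oplus a (A.oplus (A.nt j a) y) := by
  have hdj : A.nTimesDef j a := A.ntd_mono (Nat.le_succ j) hdj1
  obtain ⟨_, hda, hnt⟩ := A.ntd_succ_elim hdj1
  have hyc : A.le y (A.compl (A.nt j a)) := A.le_compl_of_D hdy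
  have hz : ∀ z, A.le z (A.nt j a) → A.le z y → z = A.zero := by
    intro z hzj hzy
    apply A.meet_mult_zero hL ha j z hdj hzj
    · exact A.D_of_le_compl (A.le_trans hzy hyc)
    · intro haz
      exact hnay (A.le_trans haz hzy)
  have r2 : A.le (A.nt j a) (A.compl a) := A.le_compl_of_D hda
  have r1 : A.le y (A.compl a) := by
    have hay : A.le a (A.compl y) :=
      A.le_trans (A.le_nt hj hdj) (A.le_compl_of_D' hdy)
    exact A.le_compl_of_D (A.D_of_le_compl hay)
  have hsc : A.le (A.oplus (A.nt j a) y) (A.compl a) := A.oplus_sup hL hdy hz r2 r1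
  have hda' : A.D a (A.oplus (A.nt j a) y) := A.D_comm _ _ (A.D_of_le_compl hsc)
  obtain ⟨hd1, hd2, he⟩ := A.assoc' a (A.nt j a) y hdy hda'
  rw [← hnt] at hd2 he
  exact ⟨hd2, he⟩

/-- An atom not occurring in a list of multiples of distinct atoms is not below the sum,
provided it is orthogonal to the sum. -/
lemma atom_not_le_sum :
    ∀ (l : List E) (k : E → ℕ) {t a : E}, l.Nodup →
      (∀ b ∈ l, A.Atom b ∧ 1 ≤ k b ∧ A.nTimesDef (k b) b) →
      A.SumDef (l.map fun b => A.nt (k b) b) t →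
      A.Atom a → a ∉ l → A.D a t → ¬ A.le a t := by
  intro l
  induction l with
  | nil =>
    intro k t a _ _ hs ha _ _ hle
    rw [A.sumdef_nil_eq hs] at hle
    exact ha.1 (A.eq_zero_of_le_zero hle)
  | cons b l ih =>
    intro k t a hnd hcond hs ha hmem hdat hle
    rw [List.map_cons] at hs
    obtain ⟨y, hy, hdby, rfl⟩ := A.sumdef_cons hs
    set xb := A.nt (k b) b with hxb
    have hab : a ≠ b := fun h => hmem (h ▸ List.mem_cons_self (a := b) (l := l))
    have haml : a ∉ l := fun h => hmem (List.mem_cons_of_mem b h)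
    have hcb := hcond b (List.mem_cons_self (a := b) (l := l))
    have hatc : A.le a (A.compl (A.oplus xb y)) := A.le_compl_of_D' hdat
    have hday : A.D a y :=
      A.D_of_le_compl (A.le_trans hatc (A.compl_antitone (A.le_oplus_right hdby)))
    have hdaxb : A.D a xb :=
      A.D_of_le_compl (A.le_trans hatc (A.compl_antitone (A.le_oplus_left hdby)))
    have hnay : ¬ A.le a y :=
      ih k hnd.of_cons (fun c hc => hcond c (List.mem_cons_of_mem b hc)) hy ha haml hday
    have hnaxb : ¬ A.le a xb := fun h =>
      A.atom_not_le_mult hL ha hcb.1 hab hcb.2.2 hdaxb h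
    have hz : ∀ z, A.le z a → A.le z xb → z = A.zero := by
      intro z hza hzx
      rcases ha.2 z hza with h0 | h1
      · exact h0
      · exact absurd (h1 ▸ hzx) hnaxb
    have h2 : A.le (A.oplus a xb) (A.oplus xb y) :=
      A.oplus_sup hL hdaxb hz hle (A.le_oplus_left hdby)
    rw [A.oplus_comm a xb hdaxb] at h2
    exact hnay (A.cancel_le_left (A.D_comm _ _ hdaxb) hdby h2)

/-- KL1: a defined orthogonal sum of multiples of distinct atoms can be raised to
any larger defined multiplicities. -/
lemma raise_all :
    ∀ (n : ℕ) (l : List E) (k m : E → ℕ),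
      (l.map fun a => m a - k a).sum = n → l.Nodup →
      (∀ a ∈ l, A.Atom a ∧ 1 ≤ k a ∧ k a ≤ m a ∧ A.nTimesDef (m a) a) →
      (∃ s, A.SumDef (l.map fun a => A.nt (k a) a) s) →
      ∃ s, A.SumDef (l.map fun a => A.nt (m a) a) s := by
  intro n
  induction n using Nat.strong_induction_on with
  | _ n ihn =>
    intro l k m hsum hnd hcond hex
    rcases Nat.eq_zero_or_pos n with hn0 | hnpos
    · subst hn0
      have : ∀ a ∈ l, A.nt (k a) a = A.nt (m a) a := by
        intro a hal
        have h1 : m a - k a = 0 :=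
          List.sum_eq_zero_iff.mp hsum _ (List.mem_map_of_mem hal)
        have h2 := (hcond a hal).2.2.1
        have : k a = m a := by omega
        rw [this]
      rwa [← List.map_congr_left this]
    · have hex0 : ∃ a₀ ∈ l, m a₀ - k a₀ ≠ 0 := by
        by_contra hc
        push_neg at hc
        have : (l.map fun a => m a - k a).sum = 0 :=
          List.sum_eq_zero (by
            intro x hx
            obtain ⟨a, hal, rfl⟩ := List.mem_map.mp hx
            exact hc a hal)
        omega
      obtain ⟨a₀, ha₀l, ha₀⟩ := hex0
      have hperm : l.Perm (a₀ :: l.erase a₀) := List.perm_cons_erase ha₀l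
      have hc₀ := hcond a₀ ha₀l
      obtain ⟨s, hs⟩ := hex
      have hs' := A.sumdef_perm (hperm.map _) hs
      rw [List.map_cons] at hs'
      obtain ⟨y, hy, hdy, rfl⟩ := A.sumdef_cons hs'
      have hndE : (l.erase a₀).Nodup := hnd.erase a₀
      have ha₀nE : a₀ ∉ l.erase a₀ := fun h => ((List.Nodup.mem_erase_iff hnd).mp h).1 rfl
      have hmemE : ∀ b ∈ l.erase a₀, b ∈ l := fun b hb => List.mem_of_mem_erase hb
      have hka₀ : A.nTimesDef (k a₀) a₀ := A.ntd_mono hc₀.2.2.1 hc₀.2.2.2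
      have hka₀1 : A.nTimesDef (k a₀ + 1) a₀ := A.ntd_mono (by omega) hc₀.2.2.2
      have hda₀y : A.D a₀ y := by
        have h1 : A.le a₀ (A.nt (k a₀) a₀) := A.le_nt hc₀.2.1 hka₀
        exact A.D_of_le_compl (A.le_trans h1 (A.le_compl_of_D' hdy))
      have hnay : ¬ A.le a₀ y :=
        A.atom_not_le_sum hL (l.erase a₀) k hndE
          (fun b hb => ⟨(hcond b (hmemE b hb)).1, (hcond b (hmemE b hb)).2.1,
            A.ntd_mono (hcond b (hmemE b hb)).2.2.1 (hcond b (hmemE b hb)).2.2.2⟩)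
          hy hc₀.1 ha₀nE hda₀y
      obtain ⟨hdnew, _⟩ := A.raise_step hL hc₀.1 hc₀.2.1 hka₀1 hdy hnay
      -- new multiplicity function
      set k' : E → ℕ := fun b => if b = a₀ then k a₀ + 1 else k b with hk'
      have hk'a₀ : k' a₀ = k a₀ + 1 := by simp [hk']
      have hk'other : ∀ b ∈ l.erase a₀, k' b = k b := by
        intro b hb
        have : b ≠ a₀ := (List.Nodup.mem_erase_iff hnd).mp hb |>.1
        simp [hk', this]
      have hnewsum : A.SumDef ((a₀ :: l.erase a₀).map fun a => A.nt (k' a) a)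
          (A.oplus (A.nt (k a₀ + 1) a₀) y) := by
        rw [List.map_cons]
        have hmapeq : ((l.erase a₀).map fun a => A.nt (k' a) a) =
            ((l.erase a₀).map fun a => A.nt (k a) a) :=
          List.map_congr_left (fun b hb => by rw [hk'other b hb])
        rw [hk'a₀, hmapeq]
        exact SumDef.cons hy hdnew
      have hnew : ∃ s, A.SumDef (l.map fun a => A.nt (k' a) a) s :=
        ⟨_, A.sumdef_perm (hperm.map _).symm hnewsum⟩
      -- measure decreases
      have hmeas : (l.map fun a => m a - k' a).sum = n - 1 := by
        have e1 : (l.map fun a => m a - k' a).sum =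
            ((a₀ :: l.erase a₀).map fun a => m a - k' a).sum :=
          (hperm.map _).sum_eq
        have e2 : (l.map fun a => m a - k a).sum =
            ((a₀ :: l.erase a₀).map fun a => m a - k a).sum :=
          (hperm.map _).sum_eq
        rw [List.map_cons] at e1 e2
        have e3 : ((l.erase a₀).map fun a => m a - k' a) =
            ((l.erase a₀).map fun a => m a - k a) :=
          List.map_congr_left (fun b hb => by rw [hk'other b hb])
        rw [e3] at e1
        rw [List.sum_cons] at e1 e2
        rw [hk'a₀] at e1
        omega
      have hcond' : ∀ a ∈ l, A.Atom a ∧ 1 ≤ k' a ∧ k' a ≤ m a ∧ A.nTimesDef (m a) a := by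
        intro a hal
        rcases eq_or_ne a a₀ with rfl | hne
        · refine ⟨hc₀.1, ?_, ?_, hc₀.2.2.2⟩
          · simp [hk']
          · have h1 := hc₀.2.2.1
            simp only [hk', if_pos rfl]
            omega
        · have := hcond a hal
          simp only [hk', if_neg hne]
          exact this
      exact ihn (n-1) (by omega) l k' m hmeas hnd hcond' hnew

end LatticeLemmas

section Forward

lemma complete_isArchimedean (hC : A.Complete) : A.IsArchimedean := by
  intro x hx0
  by_contra hc
  push_neg at hc
  set S : Set E := Set.range (fun n => A.nt n x) with hS
  obtain ⟨s, hs⟩ := (hC S).1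
  have hmem : ∀ n, A.nt n x ∈ S := fun n => ⟨n, rfl⟩
  have h1 : ∀ n, A.le (A.nt n x) s := fun n => hs.2.1 _ (hmem n)
  have hsx : A.le s (A.compl x) := by
    apply hs.2.2 _ (Set.mem_univ _)
    rintro t ⟨n, rfl⟩
    have := (A.ntd_succ_elim (hc (n+1))).2.1
    exact A.le_compl_of_D this
  have hDxs : A.D x s := A.D_of_le_compl (by
    have := A.compl_antitone hsx
    rwa [compl_compl] at this)
  have hxles : A.le x s := by
    have := h1 1
    rwa [A.nt_one] at this
  have hsub := A.sub_spec hxles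
  have h2 : ∀ n, A.le (A.nt n x) (A.sub s x) := by
    intro n
    obtain ⟨hd1, hd2, he⟩ := A.ntd_succ_elim (hc (n+1))
    have h3 : A.le (A.oplus x (A.nt n x)) (A.oplus x (A.sub s x)) := by
      rw [hsub.2, ← he]
      exact h1 (n+1)
    exact A.cancel_le_left hd2 hsub.1 h3
  have h4 : A.le s (A.sub s x) := by
    apply hs.2.2 _ (Set.mem_univ _)
    rintro t ⟨n, rfl⟩
    exact h2 n
  have h5 : A.le (A.oplus x s) s := by
    have := A.oplus_le_oplus_right h4 hsub.1
    rwa [hsub.2] at this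
  have h6 : s = A.oplus x s := A.le_antisymm (A.le_oplus_right hDxs) h5
  have h7 : A.oplus x s = A.oplus A.zero s := by
    rw [A.zero_oplus, ← h6]
  exact hx0 (A.cancel_right hDxs (A.D_zero_left s) h7)

lemma forall₂_le_map {ι : Type v} (x w : ι → E) (hdom : ∀ k, A.le (x k) (w k)) :
    ∀ l : List ι, List.Forall₂ A.le (l.map x) (l.map w) := by
  intro l
  induction l with
  | nil => exact List.Forall₂.nil
  | cons a l ih => exact List.Forall₂.cons (hdom a) ih

lemma complete_sharplyOrthocomplete (hC : A.Complete) : A.SharplyOrthocomplete := by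
  intro ι x w hsharp horth hdom
  have horthx : A.Orthogonal x := by
    intro l hnd
    obtain ⟨s, hs⟩ := horth l hnd
    obtain ⟨t, ht, _⟩ := A.sumdef_dominated (A.forall₂_le_map x w hdom l) hs
    exact ⟨t, ht⟩
  obtain ⟨v, hv⟩ := (hC (A.finiteSums x)).1
  exact ⟨v, horthx, hv⟩

end Forward

section Backward

lemma sharp_mult (hL : A.LatticeOrdered) {a : E} (ha : A.Atom a)
    (h : ∃ n, ¬ A.nTimesDef n a) : A.Sharp (A.nt (A.nMax a) a) := by
  obtain ⟨hdef, hndef⟩ := A.nMax_spec h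
  refine ⟨Set.mem_univ _, ?_, ?_⟩
  · exact (lb_pair (A := A)).mpr ⟨A.zero_le _, A.zero_le _⟩
  · intro z _ hz
    obtain ⟨hz1, hz2⟩ := (lb_pair (A := A)).mp hz
    have hdz : A.D z (A.nt (A.nMax a) a) := A.D_of_le_compl hz2
    have hnaz : ¬ A.le a z := by
      intro haz
      have : A.le a (A.compl (A.nt (A.nMax a) a)) := A.le_trans haz hz2
      have hda : A.D a (A.nt (A.nMax a) a) := A.D_of_le_compl this
      exact hndef (A.ntd_succ_intro hdef hda)
    have := A.meet_mult_zero hL ha (A.nMax a) z hdef hz1 hdz hnaz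
    rw [this]
    exact A.le_refl _

lemma inf_of_sup (hsup : ∀ T : Set E, ∃ v, A.IsSupIn Set.univ T v) :
    ∀ T : Set E, ∃ m, A.IsInfIn Set.univ T m := by
  intro T
  obtain ⟨v, hv⟩ := hsup (A.compl '' T)
  refine ⟨A.compl v, Set.mem_univ _, ?_, ?_⟩
  · intro t ht
    have h1 : A.le (A.compl t) v := hv.2.1 _ ⟨t, ht, rfl⟩
    have := A.compl_antitone h1
    rwa [compl_compl] at this
  · intro z _ hz
    have h1 : A.le v (A.compl z) := by
      apply hv.2.2 _ (Set.mem_univ _)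
      rintro t' ⟨t, ht, rfl⟩
      exact A.compl_antitone (hz t ht)
    have := A.compl_antitone h1
    rwa [compl_compl] at this

end Backward

section Main
open Classical

/-- Families of multiples of distinct atoms, all of whose finite orthosums are defined
and below every upper bound of `T`. -/
def Pfam (A : EffectAlgebra E) (T : Set E) (k : E → ℕ) : Prop :=
  (∀ a, k a ≠ 0 → A.Atom a ∧ A.nTimesDef (k a) a) ∧
  (∀ l : List E, l.Nodup → (∀ a ∈ l, k a ≠ 0) →
    ∃ s, A.SumDef (l.map fun a => A.nt (k a) a) s ∧ ∀ u, A.IsUB T u → A.le s u)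

lemma pfam_zero (T : Set E) : A.Pfam T (fun _ => 0) := by
  constructor
  · intro a ha; exact absurd rfl ha
  · intro l hnd hl
    cases l with
    | nil => exact ⟨A.zero, SumDef.nil, fun u _ => A.zero_le u⟩
    | cons a l => exact absurd rfl (hl a (List.mem_cons_self (a := a) (l := l)))

lemma pfam_chain_ub (hArch : A.IsArchimedean) (T : Set E) (c : Set (E → ℕ))
    (hcP : c ⊆ {k | A.Pfam T k}) (hchain : IsChain (· ≤ ·) c)
    (y : E → ℕ) (hyc : y ∈ c) :
    ∃ K ∈ {k | A.Pfam T k}, ∀ z ∈ c, z ≤ K := by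
  classical
  set V : E → Set ℕ := fun a => {n | ∃ g ∈ c, g a = n} with hV
  have hbdd : ∀ a, ∀ n ∈ V a, n ≤ A.nMax a := by
    rintro a n ⟨g, hg, rfl⟩
    rcases Nat.eq_zero_or_pos (g a) with h0 | hpos
    · omega
    · have hga : g a ≠ 0 := by omega
      have hAt := (hcP hg).1 a hga
      exact A.le_nMax (hArch a hAt.1.1) hAt.2
  have hbddA : ∀ a, BddAbove (V a) := fun a => ⟨A.nMax a, fun n hn => hbdd a n hn⟩
  have hne : ∀ a, (V a).Nonempty := fun a => ⟨y a, y, hyc, rfl⟩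
  set K : E → ℕ := fun a => sSup (V a) with hK
  have hKmem : ∀ a, ∃ g ∈ c, g a = K a := fun a => Nat.sSup_mem (hne a) (hbddA a)
  have hleK : ∀ g ∈ c, g ≤ K := fun g hg a => le_csSup (hbddA a) ⟨g, hg, rfl⟩
  have hattain : ∀ l : List E, ∃ g ∈ c, ∀ a ∈ l, g a = K a := by
    intro l
    induction l with
    | nil => exact ⟨y, hyc, fun a ha => absurd ha List.not_mem_nil⟩
    | cons a l ih =>
      obtain ⟨g', hg', hgl⟩ := ih
      obtain ⟨ga, hga, hgaa⟩ := hKmem a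
      rcases eq_or_ne g' ga with rfl | hne'
      · refine ⟨g', hg', fun b hb => ?_⟩
        rcases List.mem_cons.mp hb with rfl | hbl
        · exact hgaa
        · exact hgl b hbl
      rcases hchain.total hg' hga with h | h
      · refine ⟨ga, hga, fun b hb => ?_⟩
        rcases List.mem_cons.mp hb with rfl | hbl
        · exact hgaa
        · exact Nat.le_antisymm (hleK ga hga b) (by rw [← hgl b hbl]; exact h b)
      · refine ⟨g', hg', fun b hb => ?_⟩
        rcases List.mem_cons.mp hb with rfl | hbl
        · exact Nat.le_antisymm (hleK g' hg' b) (by rw [← hgaa]; exact h b)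
        · exact hgl b hbl
  refine ⟨K, ⟨?_, ?_⟩, hleK⟩
  · intro a hKa
    obtain ⟨g, hg, hga⟩ := hKmem a
    have hga0 : g a ≠ 0 := by rw [hga]; exact hKa
    have := (hcP hg).1 a hga0
    rwa [hga] at this
  · intro l hnd hl
    obtain ⟨g, hg, hgl⟩ := hattain l
    have hl' : ∀ a ∈ l, g a ≠ 0 := fun a ha => by rw [hgl a ha]; exact hl a ha
    obtain ⟨s, hs, hsu⟩ := (hcP hg).2 l hnd hl'
    refine ⟨s, ?_, hsu⟩
    have : (l.map fun a => A.nt (K a) a) = (l.map fun a => A.nt (g a) a) :=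
      List.map_congr_left (fun a ha => by rw [hgl a ha])
    rwa [this]

end Main

section Main2
open Classical

variable (hL : A.LatticeOrdered)
include hL

lemma sup_exists (hAtomic : A.Atomic) (hArch : A.IsArchimedean)
    (hSO : A.SharplyOrthocomplete) (T : Set E) :
    ∃ v, A.IsSupIn Set.univ T v := by
  classical
  obtain ⟨K, -, hKmaxl⟩ :=
    zorn_le_nonempty₀ {k | A.Pfam T k}
      (fun c hc hchain y hy => A.pfam_chain_ub hArch T c hc hchain y hy)
      (fun _ => 0) (A.pfam_zero T)
  have hKmax : ∀ z, A.Pfam T z → K ≤ z → z ≤ K := fun z hz hKz => hKmaxl.2 hz hKz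
  obtain ⟨hKP1, hKP2⟩ := (hKmaxl.1 : A.Pfam T K)
  set xf : {a : E // K a ≠ 0} → E := fun a => A.nt (K a.1) a.1 with hxf
  set wf : {a : E // K a ≠ 0} → E := fun a => A.nt (A.nMax a.1) a.1 with hwf
  have hKatom : ∀ a : {a : E // K a ≠ 0}, A.Atom a.1 := fun a => (hKP1 a.1 a.2).1
  have hKdef : ∀ a : {a : E // K a ≠ 0}, A.nTimesDef (K a.1) a.1 :=
    fun a => (hKP1 a.1 a.2).2
  have hKarch : ∀ a : {a : E // K a ≠ 0}, ∃ n, ¬ A.nTimesDef n a.1 :=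
    fun a => hArch a.1 (hKatom a).1
  have hKle : ∀ a : {a : E // K a ≠ 0}, K a.1 ≤ A.nMax a.1 :=
    fun a => A.le_nMax (hKarch a) (hKdef a)
  have hMdef : ∀ a : {a : E // K a ≠ 0}, A.nTimesDef (A.nMax a.1) a.1 :=
    fun a => (A.nMax_spec (hKarch a)).1
  have hKsum : ∀ l : List {a : E // K a ≠ 0}, l.Nodup →
      ∃ s, A.SumDef (l.map xf) s ∧ ∀ u, A.IsUB T u → A.le s u := by
    intro l hnd
    have hnd' : (l.map Subtype.val).Nodup := hnd.map Subtype.val_injective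
    have hmem : ∀ a ∈ l.map Subtype.val, K a ≠ 0 := by
      intro a ha
      obtain ⟨b, _, rfl⟩ := List.mem_map.mp ha
      exact b.2
    obtain ⟨s, hs, hsu⟩ := hKP2 (l.map Subtype.val) hnd' hmem
    rw [List.map_map] at hs
    exact ⟨s, hs, hsu⟩
  have horthw : A.Orthogonal wf := by
    intro l hnd
    have hnd' : (l.map Subtype.val).Nodup := hnd.map Subtype.val_injective
    have hmem : ∀ a ∈ l.map Subtype.val, K a ≠ 0 := by
      intro a ha
      obtain ⟨b, _, rfl⟩ := List.mem_map.mp ha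
      exact b.2
    obtain ⟨s, hs, -⟩ := hKP2 (l.map Subtype.val) hnd' hmem
    have hcond : ∀ a ∈ l.map Subtype.val,
        A.Atom a ∧ 1 ≤ K a ∧ K a ≤ A.nMax a ∧ A.nTimesDef (A.nMax a) a := by
      intro a ha
      obtain ⟨b, _, rfl⟩ := List.mem_map.mp ha
      exact ⟨hKatom b, Nat.one_le_iff_ne_zero.mpr b.2, hKle b, hMdef b⟩
    obtain ⟨t, ht⟩ := A.raise_all hL _ (l.map Subtype.val) K (fun a => A.nMax a)
      rfl hnd' hcond ⟨s, hs⟩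
    rw [List.map_map] at ht
    exact ⟨t, ht⟩
  obtain ⟨v, hvo, hvs⟩ := hSO {a : E // K a ≠ 0} xf wf
    (fun a => A.sharp_mult hL (hKatom a) (hKarch a))
    horthw
    (fun a => A.nt_le_nt (hKle a) (hMdef a))
  have hvleU : ∀ u, A.IsUB T u → A.le v u := by
    intro u hu
    apply hvs.2.2 u (Set.mem_univ u)
    rintro s ⟨l, hnd, hsum⟩
    obtain ⟨s', hs', hsu⟩ := hKsum l hnd
    rw [A.sumdef_unique hsum hs']
    exact hsu u hu
  have hEsum : ∀ l : List E, l.Nodup → (∀ a ∈ l, K a ≠ 0) →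
      ∃ s, A.SumDef (l.map fun a => A.nt (K a) a) s ∧ A.le s v ∧
        ∀ u, A.IsUB T u → A.le s u := by
    intro l hnd hl
    obtain ⟨s, hs, hsu⟩ := hKP2 l hnd hl
    refine ⟨s, hs, ?_, hsu⟩
    have hpm : ∀ (l' : List E) (hl' : ∀ a ∈ l', K a ≠ 0),
        List.map xf (l'.pmap (fun a h => (⟨a, h⟩ : {a : E // K a ≠ 0})) hl')
          = l'.map (fun a => A.nt (K a) a) := by
      intro l'
      induction l' with
      | nil => intro _; rfl
      | cons a l' ih =>
        intro hl'
        simp only [List.pmap, List.map_cons]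
        exact congrArg₂ List.cons rfl (ih _)
    have hmemfs : s ∈ A.finiteSums xf := by
      refine ⟨l.pmap (fun a h => (⟨a, h⟩ : {a : E // K a ≠ 0})) hl, ?_, ?_⟩
      · exact hnd.pmap (fun a _ b _ e => congrArg Subtype.val e)
      · rw [hpm l hl]
        exact hs
    exact hvs.2.1 s hmemfs
  have hub : A.IsUB T v := by
    intro t ht
    by_contra hnav
    set j := jnF hL t v with hj
    have hvj : A.le v j := A.le_jnF_right hL t v
    have htj : A.le t j := A.le_jnF_left hL t v
    set d := A.sub j v with hd
    have hds := A.sub_spec hvj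
    have hd0 : d ≠ A.zero := by
      intro h0
      apply hnav
      have hjv : j = v := by
        rw [← hds.2, show A.sub j v = A.zero from h0, A.oplus_zero]
      rw [← hjv]; exact htj
    obtain ⟨b, hbatom, hbd⟩ := hAtomic d hd0
    have hdv' : A.le d (A.compl v) := A.le_compl_of_D hds.1
    have hbv' : A.le b (A.compl v) := A.le_trans hbd hdv'
    have hjleu : ∀ u, A.IsUB T u → A.le j u :=
      fun u hu => A.jnF_le hL (hu t ht) (hvleU u hu)
    have hdvj : A.oplus d v = j := by
      rw [← A.oplus_comm v d hds.1]; exact hds.2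
    set K' : E → ℕ := fun c => if c = b then K b + 1 else K c with hK'
    have hKbdef : A.nTimesDef (K b) b := by
      rcases Nat.eq_zero_or_pos (K b) with h0 | hpos
      · rw [h0]; exact A.ntd_zero b
      · exact (hKP1 b (by omega)).2
    have hntb_le_v : A.le (A.nt (K b) b) v := by
      rcases Nat.eq_zero_or_pos (K b) with h0 | hpos
      · rw [h0, A.nt_zero]; exact A.zero_le v
      · obtain ⟨s, hs, hsv, -⟩ := hEsum [b] (List.nodup_singleton b)
          (by intro a ha; rw [List.mem_singleton] at ha; subst ha; omega)
        rw [List.map_singleton] at hs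
        obtain ⟨t', ht', hdt', rfl⟩ := A.sumdef_cons hs
        have ht0 : t' = A.zero := A.sumdef_nil_eq ht'
        rw [ht0, A.oplus_zero] at hsv
        exact hsv
    have hdKb : A.D b (A.nt (K b) b) :=
      A.D_of_le_compl (A.le_trans hbv' (A.compl_antitone hntb_le_v))
    have hKb1def : A.nTimesDef (K b + 1) b := A.ntd_succ_intro hKbdef hdKb
    have hK'P : A.Pfam T K' := by
      constructor
      · intro a ha
        rcases eq_or_ne a b with rfl | hne
        · simp only [hK', if_pos rfl]
          exact ⟨hbatom, hKb1def⟩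
        · simp only [hK', if_neg hne] at ha ⊢
          exact hKP1 a ha
      · intro l hnd hl
        by_cases hbl : b ∈ l
        · have hperm : l.Perm (b :: l.erase b) := List.perm_cons_erase hbl
          have hndE : (l.erase b).Nodup := hnd.erase b
          have hbE : b ∉ l.erase b := fun h => ((List.Nodup.mem_erase_iff hnd).mp h).1 rfl
          have hlE0 : ∀ a ∈ l.erase b, K a ≠ 0 := by
            intro a ha
            have hab : a ≠ b := ((List.Nodup.mem_erase_iff hnd).mp ha).1
            have := hl a (List.mem_of_mem_erase ha)
            simpa [hK', hab] using this
          obtain ⟨y, hy, hyv, hyu⟩ := hEsum (l.erase b) hndE hlE0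
          have hday : A.D b y :=
            A.D_of_le_compl (A.le_trans hbv' (A.compl_antitone hyv))
          have htail : ((l.erase b).map fun a => A.nt (K' a) a)
              = ((l.erase b).map fun a => A.nt (K a) a) :=
            List.map_congr_left (fun a ha => by
              have hab : a ≠ b := ((List.Nodup.mem_erase_iff hnd).mp ha).1
              simp [hK', hab])
          rcases Nat.eq_zero_or_pos (K b) with hKb0 | hKbpos
          · refine ⟨A.oplus b y, ?_, ?_⟩
            · apply A.sumdef_perm (hperm.map _).symm
              have e1 : ((b :: l.erase b).map fun a => A.nt (K' a) a)
                  = b :: ((l.erase b).map fun a => A.nt (K a) a) := by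
                rw [List.map_cons, htail]
                congr 1
                simp [hK', hKb0, A.nt_one]
              rw [e1]
              exact SumDef.cons hy hday
            · intro u hu
              have h1 : A.le (A.oplus b y) (A.oplus d v) :=
                A.oplus_le_oplus hbd hyv (A.D_comm _ _ hds.1)
              exact A.le_trans h1 (hdvj ▸ hjleu u hu)
          · have hl0 : ∀ a ∈ l, K a ≠ 0 := by
              intro a ha
              rcases eq_or_ne a b with rfl | hab
              · omega
              · have := hl a ha; simpa [hK', hab] using this
            obtain ⟨s, hs, hsv, hsu⟩ := hEsum l hnd hl0
            have hs' := A.sumdef_perm (hperm.map _) hs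
            rw [List.map_cons] at hs'
            obtain ⟨y', hy', hdy', rfl⟩ := A.sumdef_cons hs'
            have hyy : y' = y := A.sumdef_unique hy' hy
            subst hyy
            have hnay : ¬ A.le b y' :=
              A.atom_not_le_sum hL (l.erase b) K hndE
                (fun a ha => ⟨(hKP1 a (hlE0 a ha)).1,
                  Nat.one_le_iff_ne_zero.mpr (hlE0 a ha), (hKP1 a (hlE0 a ha)).2⟩)
                hy' hbatom hbE hday
            obtain ⟨hdnew, henew⟩ := A.raise_step hL hbatom hKbpos hKb1def hdy' hnay
            refine ⟨A.oplus (A.nt (K b + 1) b) y', ?_, ?_⟩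
            · apply A.sumdef_perm (hperm.map _).symm
              have e1 : ((b :: l.erase b).map fun a => A.nt (K' a) a)
                  = A.nt (K b + 1) b :: ((l.erase b).map fun a => A.nt (K a) a) := by
                rw [List.map_cons, htail]
                congr 1
                simp [hK']
              rw [e1]
              exact SumDef.cons hy' hdnew
            · intro u hu
              rw [henew]
              have h1 : A.le (A.oplus b (A.oplus (A.nt (K b) b) y')) (A.oplus d v) :=
                A.oplus_le_oplus hbd hsv (A.D_comm _ _ hds.1)
              exact A.le_trans h1 (hdvj ▸ hjleu u hu)
        · have hl0 : ∀ a ∈ l, K a ≠ 0 := by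
            intro a ha
            have hab : a ≠ b := fun h => hbl (h ▸ ha)
            have := hl a ha; simpa [hK', hab] using this
          obtain ⟨s, hs, hsu⟩ := hKP2 l hnd hl0
          refine ⟨s, ?_, hsu⟩
          have e1 : (l.map fun a => A.nt (K' a) a) = (l.map fun a => A.nt (K a) a) :=
            List.map_congr_left (fun a ha => by
              have hab : a ≠ b := fun h => hbl (h ▸ ha)
              simp [hK', hab])
          rwa [e1]
    have hKK' : K ≤ K' := by
      intro a
      rcases eq_or_ne a b with rfl | hab
      · simp [hK']
      · simp [hK', hab]
    have hle' := hKmax K' hK'P hKK' b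
    simp only [hK', if_pos rfl] at hle'
    omega
  exact ⟨v, Set.mem_univ v, hub, fun z _ hz => hvleU z hz⟩

end Main2

end EffectAlgebra

/-- An atomic lattice effect algebra is a complete lattice iff it is Archimedean
and sharply orthocomplete. -/
theorem stmt19 {E : Type u} (A : EffectAlgebra E) (hL : A.LatticeOrdered)
    (hAtomic : A.Atomic) :
    A.Complete ↔ (A.IsArchimedean ∧ A.SharplyOrthocomplete) := by
  constructor
  · intro hC
    exact ⟨A.complete_isArchimedean hC, A.complete_sharplyOrthocomplete hC⟩
  · rintro ⟨hArch, hSO⟩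
    intro S
    have hsup := A.sup_exists hL hAtomic hArch hSO
    exact ⟨hsup S, A.inf_of_sup hsup S⟩
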